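/- Let F : ℝ → Mₙ(ℝ) and m : ℝ → ℝⁿ be continuous, let n̄ : ℝ → ℝⁿ be differentiable with n̄'(t) = F(t) n̄(t) + m(t), and let Σ : ℝ → Mₙ(ℝ) be differentiable with Σ(t) symmetric positive definite for every t and Σ'(t) = F(t)Σ(t) + Σ(t)F(t)ᵀ. Define the Gaussian density ρ(x,t) := (2π)^{−n/2} (det Σ(t))^{−1/2} exp(−(1/2)(x − n̄(t))ᵀ Σ(t)⁻¹ (x − n̄(t))). Then ρ satisfies the continuity equation ∂ρ/∂t + ∇·((F(t)x + m(t)) ρ) = 0 for all x ∈ ℝⁿ and all t, where ∇· denotes the divergence in x. -/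

import Mathlib

open Set Matrix
open scoped RealInnerProductSpace

/-- The divergence in `x` of a vector field `w : ℝⁿ → ℝⁿ`: `∑ i, ∂wᵢ/∂xᵢ`. -/
noncomputable def diver {n : ℕ} (w : EuclideanSpace ℝ (Fin n) → EuclideanSpace ℝ (Fin n))
    (x : EuclideanSpace ℝ (Fin n)) : ℝ :=
  ∑ i : Fin n, fderiv ℝ (fun y => w y i) x (EuclideanSpace.single i 1)

/-- The Gaussian density with mean `nb` and covariance matrix `S` on `ℝⁿ`:
`(2π)^{−n/2} (det S)^{−1/2} exp(−(1/2)(x − nb)ᵀ S⁻¹ (x − nb))`. -/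
noncomputable def gaussDensity {n : ℕ} (S : Matrix (Fin n) (Fin n) ℝ)
    (nb x : EuclideanSpace ℝ (Fin n)) : ℝ :=
  (2 * Real.pi) ^ (-(n : ℝ) / 2) * S.det ^ (-(1 : ℝ) / 2) *
    Real.exp (-(1 / 2) * ⟪x - nb, Matrix.toEuclideanLin S⁻¹ (x - nb)⟫)

theorem my_hasDerivAt_det {n : ℕ} {M : ℝ → Matrix (Fin n) (Fin n) ℝ}
    {M' : Matrix (Fin n) (Fin n) ℝ} {t : ℝ}
    (h : ∀ i j, HasDerivAt (fun s => M s i j) (M' i j) t) :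
    HasDerivAt (fun s => (M s).det) (((M t).adjugate * M').trace) t := by
  have step : HasDerivAt (fun s => (M s).det)
      (∑ σ : Equiv.Perm (Fin n), (Equiv.Perm.sign σ : ℝ) *
        ∑ c : Fin n, (∏ j ∈ Finset.univ.erase c, M t (σ j) j) * M' (σ c) c) t := by
    simp only [Matrix.det_apply']
    exact HasDerivAt.fun_sum fun σ _ =>
      ((HasDerivAt.fun_finsetProd (fun c _ => h (σ c) c))).const_mul _
  convert step using 1
  simp only [Finset.mul_sum]
  rw [Finset.sum_comm, Matrix.trace]
  apply Finset.sum_congr rfl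
  intro c _
  have hd : ((M t).adjugate * M').diag c = ((M t).adjugate *ᵥ (fun k => M' k c)) c := by
    simp [Matrix.mul_apply, Matrix.mulVec, dotProduct, Matrix.diag]
  rw [hd, ← Matrix.cramer_eq_adjugate_mulVec, Matrix.cramer_apply, Matrix.det_apply']
  apply Finset.sum_congr rfl
  intro σ _
  have hp : (∏ i, ((M t).updateCol c fun k => M' k c) (σ i) i)
      = M' (σ c) c * ∏ j ∈ Finset.univ.erase c, M t (σ j) j := by
    rw [← Finset.mul_prod_erase Finset.univ _ (Finset.mem_univ c)]
    congr 1
    · simp [Matrix.updateCol_apply]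
    · exact Finset.prod_congr rfl fun j hj => by
        simp [Matrix.updateCol_apply, (Finset.mem_erase.mp hj).1]
  rw [hp]; ring

theorem my_hasDerivAt_inv {n : ℕ} {M : ℝ → Matrix (Fin n) (Fin n) ℝ}
    {M' : Matrix (Fin n) (Fin n) ℝ} {t : ℝ}
    (h : ∀ i j, HasDerivAt (fun s => M s i j) (M' i j) t)
    (hdet : ∀ s, IsUnit (M s).det) :
    ∀ i j, HasDerivAt (fun s => (M s)⁻¹ i j)
      ((-((M t)⁻¹ * M' * (M t)⁻¹)) i j) t := by
  have hadj : ∀ i j, DifferentiableAt ℝ (fun s => (M s).adjugate i j) t := by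
    intro i j
    have : ∀ s, (M s).adjugate i j = ((M s).updateRow j (Pi.single i 1)).det := by
      intro s; rw [Matrix.adjugate_apply]
    simp only [this]
    have hent : ∀ p q, HasDerivAt (fun s => ((M s).updateRow j (Pi.single i 1)) p q)
        ((Matrix.updateRow M' j 0) p q) t := by
      intro p q
      by_cases hpj : p = j
      · subst hpj
        simp only [Matrix.updateRow_self]
        exact hasDerivAt_const _ _
      · simp only [Matrix.updateRow_ne hpj]
        exact h p q
    exact (my_hasDerivAt_det hent).differentiableAt
  have hdetD : HasDerivAt (fun s => (M s).det) (((M t).adjugate * M').trace) t :=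
    my_hasDerivAt_det h
  have hinv_eq : ∀ i j, (fun s => (M s)⁻¹ i j)
      = fun s => ((M s).det)⁻¹ * (M s).adjugate i j := by
    intro i j; funext s
    rw [Matrix.inv_def, Ring.inverse_eq_inv, Matrix.smul_apply, smul_eq_mul]
  have hdiff : ∀ i j, DifferentiableAt ℝ (fun s => (M s)⁻¹ i j) t := by
    intro i j; rw [hinv_eq]
    exact ((hdetD.differentiableAt).inv (hdet t).ne_zero).mul (hadj i j)
  set B : Matrix (Fin n) (Fin n) ℝ :=
    Matrix.of (fun i j => deriv (fun s => (M s)⁻¹ i j) t) with hBdef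
  have hB : ∀ i j, HasDerivAt (fun s => (M s)⁻¹ i j) (B i j) t := fun i j =>
    (hdiff i j).hasDerivAt
  have key : M' * (M t)⁻¹ + M t * B = 0 := by
    ext i j
    have hconst : (fun s => ∑ k, M s i k * (M s)⁻¹ k j)
        = fun _ => (1 : Matrix (Fin n) (Fin n) ℝ) i j := by
      funext s
      rw [← Matrix.mul_apply, Matrix.mul_nonsing_inv _ (hdet s)]
    have h1 : HasDerivAt (fun s => ∑ k, M s i k * (M s)⁻¹ k j)
        (∑ k, (M' i k * (M t)⁻¹ k j + M t i k * B k j)) t :=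
      HasDerivAt.fun_sum fun k _ => (h i k).mul (hB k j)
    rw [hconst] at h1
    have h0 : (∑ k, (M' i k * (M t)⁻¹ k j + M t i k * B k j)) = 0 :=
      h1.unique (hasDerivAt_const _ _)
    simpa [Matrix.add_apply, Matrix.mul_apply, Finset.sum_add_distrib] using h0
  have hBeq : B = -((M t)⁻¹ * M' * (M t)⁻¹) := by
    have h2 : M t * B = -(M' * (M t)⁻¹) := by
      have h3 : M t * B = -(M' * (M t)⁻¹) + (M' * (M t)⁻¹ + M t * B) := by
        rw [neg_add_cancel_left]
      rw [h3, key, add_zero]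
    calc B = ((M t)⁻¹ * M t) * B := by rw [Matrix.nonsing_inv_mul _ (hdet t), one_mul]
    _ = (M t)⁻¹ * (M t * B) := by rw [Matrix.mul_assoc]
    _ = -((M t)⁻¹ * M' * (M t)⁻¹) := by rw [h2, Matrix.mul_neg, Matrix.mul_assoc]
  intro i j
  have := hB i j
  rwa [hBeq] at this

theorem gaussDensity_eq {n : ℕ} (P : Matrix (Fin n) (Fin n) ℝ) (b y : EuclideanSpace ℝ (Fin n)) :
    gaussDensity P b y = (2 * Real.pi) ^ (-(n : ℝ) / 2) * P.det ^ (-(1 : ℝ) / 2) *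
      Real.exp (-(1 / 2 : ℝ) * ∑ i, (y i - b i) * ∑ j, P⁻¹ i j * (y j - b j)) := by
  unfold gaussDensity
  have h : ⟪y - b, Matrix.toEuclideanLin P⁻¹ (y - b)⟫ =
      ∑ i, (y i - b i) * ∑ j, P⁻¹ i j * (y j - b j) := by
    simp [PiLp.inner_apply, RCLike.inner_apply, Matrix.toEuclideanLin_apply, Matrix.mulVec,
      dotProduct, PiLp.sub_apply]
    exact Finset.sum_congr rfl fun i _ => mul_comm _ _
  rw [h]

/-- If `n̄' = F n̄ + m` and `Σ' = FΣ + ΣFᵀ` with `Σ(t)` symmetric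
positive definite, then the Gaussian density with mean `n̄(t)` and covariance `Σ(t)`
satisfies the continuity equation `∂ρ/∂t + ∇·((F(t)x + m(t))ρ) = 0`. -/
theorem gaussian_continuity_equation {n : ℕ}
    (F : ℝ → Matrix (Fin n) (Fin n) ℝ) (m : ℝ → EuclideanSpace ℝ (Fin n))
    (hF : Continuous F) (hm : Continuous m)
    (nb : ℝ → EuclideanSpace ℝ (Fin n))
    (hnb : ∀ t, HasDerivAt nb (Matrix.toEuclideanLin (F t) (nb t) + m t) t)
    (S S' : ℝ → Matrix (Fin n) (Fin n) ℝ)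
    (hS : ∀ (t : ℝ) (i j : Fin n), HasDerivAt (fun s => S s i j) (S' t i j) t)
    (hSpd : ∀ t, (S t).PosDef)
    (hS' : ∀ t, S' t = F t * S t + S t * (F t)ᵀ) :
    ∀ (x : EuclideanSpace ℝ (Fin n)) (t : ℝ),
      deriv (fun s => gaussDensity (S s) (nb s) x) t
        + diver (fun y => gaussDensity (S t) (nb t) y •
            (Matrix.toEuclideanLin (F t) y + m t)) x = 0 := by
  intro x t
  classical
  have hdpos : 0 < (S t).det := (hSpd t).det_pos
  have hdet : ∀ s, IsUnit (S s).det := fun s => isUnit_iff_ne_zero.mpr (hSpd s).det_pos.ne'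
  set A : Matrix (Fin n) (Fin n) ℝ := (S t)⁻¹ with hAdef
  have hMA : S t * A = 1 := Matrix.mul_nonsing_inv _ (hdet t)
  have hAM : A * S t = 1 := Matrix.nonsing_inv_mul _ (hdet t)
  have hsymmS : (S t)ᵀ = S t := by
    ext i j
    have h := congrFun (congrFun (hSpd t).isHermitian.eq i) j
    simpa [Matrix.conjTranspose_apply] using h
  have hAT : Aᵀ = A := by rw [hAdef, Matrix.transpose_nonsing_inv, hsymmS]
  have hAsymm : ∀ i j, A i j = A j i := by
    intro i j
    have h := congrFun (congrFun hAT j) i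
    simpa [Matrix.transpose_apply] using h
  set d : ℝ := (S t).det with hddef
  set K : ℝ := (2 * Real.pi) ^ (-(n : ℝ) / 2) with hKdef
  set v : Fin n → ℝ := fun i => x i - nb t i with hvdef
  set a : Fin n → ℝ := fun i => ∑ j, A i j * v j with hadef
  set u : Fin n → ℝ := fun i => (∑ j, F t i j * nb t j) + m t i with hudef
  set w : Fin n → ℝ := fun i => (∑ j, F t i j * x j) + m t i with hwdef
  set trF : ℝ := ∑ i, F t i i with htrFdef
  set ρ : ℝ := K * d ^ (-(1 : ℝ) / 2) * Real.exp (-(1 / 2 : ℝ) * ∑ i, v i * a i) with hρdef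
  -- component derivatives of nb
  have hnbc : ∀ i, HasDerivAt (fun s => nb s i) (u i) t := by
    intro i
    have h1 := (EuclideanSpace.proj i (𝕜 := ℝ)).hasFDerivAt.comp_hasDerivAt t (hnb t)
    have h2 : (EuclideanSpace.proj i (𝕜 := ℝ)) (Matrix.toEuclideanLin (F t) (nb t) + m t)
        = u i := by
      simp [hudef, Matrix.toEuclideanLin_apply, Matrix.mulVec, dotProduct]
    rw [h2] at h1
    exact h1
  -- time derivative of the quadratic form
  set Q : ℝ → ℝ := fun s => ∑ i, (x i - nb s i) * ∑ j, (S s)⁻¹ i j * (x j - nb s j) with hQdef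
  have hvd : ∀ i, HasDerivAt (fun s => x i - nb s i) (-u i) t := by
    intro i
    have h := (hasDerivAt_const t (x i)).sub (hnbc i)
    simp only [zero_sub] at h
    exact h
  have hinv : ∀ i j, HasDerivAt (fun s => (S s)⁻¹ i j) ((-(A * S' t * A)) i j) t :=
    my_hasDerivAt_inv (hS t) hdet
  set Q'v : ℝ := ∑ i, ((-u i) * a i +
      v i * (∑ j, ((-(A * S' t * A)) i j * v j + A i j * (-u j)))) with hQ'vdef
  have hQd : HasDerivAt Q Q'v t := by
    apply HasDerivAt.fun_sum
    intro i _
    exact (hvd i).mul (HasDerivAt.fun_sum fun j _ => (hinv i j).mul (hvd j))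
  have hQt : Q t = ∑ i, v i * a i := rfl
  -- time derivative of the density
  have hgd : (fun s => gaussDensity (S s) (nb s) x)
      = fun s => K * (S s).det ^ (-(1 : ℝ) / 2) * Real.exp (-(1 / 2 : ℝ) * Q s) := by
    funext s
    rw [gaussDensity_eq]
  have hD1 : HasDerivAt (fun s => (S s).det ^ (-(1 : ℝ) / 2))
      (((S t).adjugate * S' t).trace * (-(1 : ℝ) / 2) * d ^ (-(1 : ℝ) / 2 - 1)) t :=
    (my_hasDerivAt_det (hS t)).rpow_const (Or.inl hdpos.ne')
  have hD2 : HasDerivAt (fun s => Real.exp (-(1 / 2 : ℝ) * Q s))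
      (Real.exp (-(1 / 2 : ℝ) * Q t) * (-(1 / 2 : ℝ) * Q'v)) t :=
    (hQd.const_mul _).exp
  have hρd : HasDerivAt (fun s => gaussDensity (S s) (nb s) x)
      ((K * (((S t).adjugate * S' t).trace * (-(1 : ℝ) / 2) * d ^ (-(1 : ℝ) / 2 - 1)))
          * Real.exp (-(1 / 2 : ℝ) * Q t)
        + (K * d ^ (-(1 : ℝ) / 2)) * (Real.exp (-(1 / 2 : ℝ) * Q t) * (-(1 / 2 : ℝ) * Q'v))) t := by
    rw [hgd]
    exact (hD1.const_mul K).mul hD2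
  -- trace identity
  have hadjeq : (S t).adjugate = d • A := by
    rw [hAdef, Matrix.inv_def, Ring.inverse_eq_inv, ← hddef, smul_smul,
      mul_inv_cancel₀ hdpos.ne', one_smul]
  have ht1 : (A * (F t * S t)).trace = trF := by
    rw [← Matrix.mul_assoc, Matrix.trace_mul_comm, ← Matrix.mul_assoc, hMA, Matrix.one_mul]
    simp [Matrix.trace, Matrix.diag, htrFdef]
  have ht2 : (A * (S t * (F t)ᵀ)).trace = trF := by
    rw [← Matrix.mul_assoc, hAM, Matrix.one_mul, Matrix.trace_transpose]
    simp [Matrix.trace, Matrix.diag, htrFdef]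
  have htr : ((S t).adjugate * S' t).trace = d * (2 * trF) := by
    rw [hadjeq, Matrix.smul_mul, Matrix.trace_smul, smul_eq_mul, hS' t, Matrix.mul_add,
      Matrix.trace_add, ht1, ht2]
    ring
  have hpow : d ^ (-(1 : ℝ) / 2 - 1) = d ^ (-(1 : ℝ) / 2) * d⁻¹ := by
    rw [Real.rpow_sub hdpos, Real.rpow_one]
    ring
  have hderiv_eq : deriv (fun s => gaussDensity (S s) (nb s) x) t
      = ρ * (-trF) + ρ * (-(1 / 2 : ℝ) * Q'v) := by
    rw [hρd.deriv, htr, hpow, hQt, hρdef]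
    field_simp
  -- spatial derivatives
  have hproj : ∀ p : Fin n, HasFDerivAt (fun y : EuclideanSpace ℝ (Fin n) => y p)
      (EuclideanSpace.proj p (𝕜 := ℝ)) x := by
    intro p
    have h := (EuclideanSpace.proj p (𝕜 := ℝ)).hasFDerivAt (x := x)
    exact h
  set LQ : EuclideanSpace ℝ (Fin n) →L[ℝ] ℝ :=
    ∑ p, (v p • (∑ j, A p j • EuclideanSpace.proj (𝕜 := ℝ) j)
      + a p • EuclideanSpace.proj (𝕜 := ℝ) p) with hLQdef
  have hQX : HasFDerivAt (fun y : EuclideanSpace ℝ (Fin n) =>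
      ∑ p, (y p - nb t p) * ∑ j, A p j * (y j - nb t j)) LQ x := by
    apply HasFDerivAt.fun_sum
    intro p _
    exact ((hproj p).sub_const _).mul (HasFDerivAt.fun_sum fun j _ => ((hproj j).sub_const _).const_mul _)
  set Lg : EuclideanSpace ℝ (Fin n) →L[ℝ] ℝ :=
    (K * d ^ (-(1 : ℝ) / 2)) • (Real.exp (-(1 / 2 : ℝ) * ∑ p, v p * a p) •
      ((-(1 / 2 : ℝ)) • LQ)) with hLgdef
  have hg : HasFDerivAt (fun y : EuclideanSpace ℝ (Fin n) => K * d ^ (-(1 : ℝ) / 2) *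
      Real.exp (-(1 / 2 : ℝ) * ∑ p, (y p - nb t p) * ∑ j, A p j * (y j - nb t j))) Lg x :=
    ((hQX.const_mul _).exp).const_mul _
  set Lw : Fin n → (EuclideanSpace ℝ (Fin n) →L[ℝ] ℝ) :=
    fun i => ∑ j, F t i j • EuclideanSpace.proj (𝕜 := ℝ) j with hLwdef
  have hwF : ∀ i, HasFDerivAt (fun y : EuclideanSpace ℝ (Fin n) =>
      (∑ j, F t i j * y j) + m t i) (Lw i) x :=
    fun i => (HasFDerivAt.fun_sum fun j _ => (hproj j).const_mul _).add_const _
  have hfull : ∀ i, HasFDerivAt (fun y : EuclideanSpace ℝ (Fin n) =>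
      (K * d ^ (-(1 : ℝ) / 2) *
        Real.exp (-(1 / 2 : ℝ) * ∑ p, (y p - nb t p) * ∑ j, A p j * (y j - nb t j)))
      * ((∑ j, F t i j * y j) + m t i))
      (ρ • Lw i + w i • Lg) x := fun i => hg.mul (hwF i)
  have hcomp : ∀ i : Fin n, (fun y => (gaussDensity (S t) (nb t) y •
      (Matrix.toEuclideanLin (F t) y + m t)) i)
      = fun y : EuclideanSpace ℝ (Fin n) => (K * d ^ (-(1 : ℝ) / 2) *
          Real.exp (-(1 / 2 : ℝ) * ∑ p, (y p - nb t p) * ∑ j, A p j * (y j - nb t j)))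
        * ((∑ j, F t i j * y j) + m t i) := by
    intro i; funext y
    rw [PiLp.smul_apply, smul_eq_mul, PiLp.add_apply, gaussDensity_eq]
    congr 1
  have hsingle : ∀ (j i : Fin n),
      EuclideanSpace.proj (𝕜 := ℝ) j (EuclideanSpace.single i (1 : ℝ))
        = if j = i then 1 else 0 := by
    intro j i
    simp [EuclideanSpace.single_apply]
  have hLw_eval : ∀ i, Lw i (EuclideanSpace.single i (1 : ℝ)) = F t i i := by
    intro i
    rw [hLwdef]
    simp only [ContinuousLinearMap.sum_apply, ContinuousLinearMap.smul_apply, hsingle]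
    simp
  have hLQ_eval : ∀ i, LQ (EuclideanSpace.single i (1 : ℝ)) = 2 * a i := by
    intro i
    rw [hLQdef]
    simp only [ContinuousLinearMap.sum_apply, ContinuousLinearMap.add_apply,
      ContinuousLinearMap.smul_apply, hsingle]
    simp only [smul_eq_mul, mul_ite, mul_one, mul_zero]
    rw [Finset.sum_add_distrib]
    have e1 : (∑ p, v p * ∑ j, if j = i then A p j else 0) = a i := by
      have h1 : ∀ p, (∑ j, if j = i then A p j else 0) = A p i := by
        intro p; simp
      rw [Finset.sum_congr rfl fun p _ => by rw [h1 p]]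
      simp only [hadef]
      exact Finset.sum_congr rfl fun p _ => by rw [hAsymm p i]; ring
    have e2 : (∑ p, if p = i then a p else 0) = a i := by simp
    rw [e1, e2]
    ring
  have hfd : ∀ i, fderiv ℝ (fun y => (gaussDensity (S t) (nb t) y •
      (Matrix.toEuclideanLin (F t) y + m t)) i) x = ρ • Lw i + w i • Lg := by
    intro i
    rw [hcomp i]
    exact (hfull i).fderiv
  have hLg_eval : ∀ i, Lg (EuclideanSpace.single i (1 : ℝ)) = ρ * (-(a i)) := by
    intro i
    rw [hLgdef]
    simp only [ContinuousLinearMap.smul_apply, smul_eq_mul]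
    rw [hLQ_eval i, hρdef]
    ring
  have hdiver : diver (fun y => gaussDensity (S t) (nb t) y •
      (Matrix.toEuclideanLin (F t) y + m t)) x = ρ * trF - ρ * ∑ i, w i * a i := by
    unfold diver
    have hterm : ∀ i : Fin n, fderiv ℝ (fun y => (gaussDensity (S t) (nb t) y •
        (Matrix.toEuclideanLin (F t) y + m t)) i) x (EuclideanSpace.single i 1)
        = ρ * F t i i + w i * (ρ * (-(a i))) := by
      intro i
      rw [hfd i, ContinuousLinearMap.add_apply, ContinuousLinearMap.smul_apply,
        ContinuousLinearMap.smul_apply, hLw_eval i, hLg_eval i, smul_eq_mul, smul_eq_mul]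
    rw [Finset.sum_congr rfl fun i _ => hterm i, Finset.sum_add_distrib]
    have h2 : ∑ i, w i * (ρ * (-(a i))) = -(ρ * ∑ i, w i * a i) := by
      rw [Finset.mul_sum, ← Finset.sum_neg_distrib]
      exact Finset.sum_congr rfl fun i _ => by ring
    rw [h2, htrFdef, Finset.mul_sum]
    have h3 : ∑ i, ρ * F t i i = ∑ i, F t i i * ρ := Finset.sum_congr rfl fun i _ => by ring
    rw [Finset.sum_congr rfl fun i _ => (by ring : ρ * F t i i = F t i i * ρ)]
    rw [← Finset.sum_mul]
    ring
  -- the key matrix identity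
  have hkey : A * S' t * A = A * F t + (F t)ᵀ * A := by
    rw [hS' t, Matrix.mul_add, Matrix.add_mul]
    congr 1
    · calc A * (F t * S t) * A = A * (F t * (S t * A)) := by
            rw [Matrix.mul_assoc, Matrix.mul_assoc]
      _ = A * F t := by rw [hMA, Matrix.mul_one]
    · calc A * (S t * (F t)ᵀ) * A = (A * S t) * ((F t)ᵀ * A) := by
            rw [Matrix.mul_assoc, Matrix.mul_assoc, Matrix.mul_assoc]
      _ = (F t)ᵀ * A := by rw [hAM, Matrix.one_mul]
  -- sum identities
  have f1 : (∑ i, v i * ∑ j, A i j * u j) = ∑ j, u j * a j := by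
    simp only [Finset.mul_sum, hadef]
    rw [Finset.sum_comm]
    exact Finset.sum_congr rfl fun j _ => Finset.sum_congr rfl fun i _ => by
      rw [hAsymm i j]; ring
  have f2 : (∑ i, v i * ∑ j, (A * F t) i j * v j) = ∑ k, (∑ j, F t k j * v j) * a k := by
    have e1 : ∀ i, v i * ∑ j, (A * F t) i j * v j
        = ∑ j, ∑ k, v i * A i k * F t k j * v j := by
      intro i
      rw [Finset.mul_sum]
      apply Finset.sum_congr rfl; intro j _
      rw [Matrix.mul_apply, Finset.sum_mul, Finset.mul_sum]
      exact Finset.sum_congr rfl fun k _ => by ring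
    have e2 : ∀ k, (∑ j, F t k j * v j) * a k = ∑ i, ∑ j, v i * A i k * F t k j * v j := by
      intro k
      calc (∑ j, F t k j * v j) * a k = ∑ j, ∑ i, v i * A i k * F t k j * v j := by
            rw [Finset.sum_mul]
            apply Finset.sum_congr rfl; intro j _
            simp only [hadef]
            rw [Finset.mul_sum]
            apply Finset.sum_congr rfl; intro i _
            rw [hAsymm i k]; ring
        _ = ∑ i, ∑ j, v i * A i k * F t k j * v j := Finset.sum_comm
    rw [Finset.sum_congr rfl fun i _ => e1 i, Finset.sum_congr rfl fun k _ => e2 k]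
    calc ∑ i, ∑ j, ∑ k, v i * A i k * F t k j * v j
        = ∑ i, ∑ k, ∑ j, v i * A i k * F t k j * v j :=
          Finset.sum_congr rfl fun i _ => Finset.sum_comm
      _ = ∑ k, ∑ i, ∑ j, v i * A i k * F t k j * v j := Finset.sum_comm
  have f3 : (∑ i, v i * ∑ j, ((F t)ᵀ * A) i j * v j) = ∑ k, (∑ j, F t k j * v j) * a k := by
    have e1 : ∀ i, v i * ∑ j, ((F t)ᵀ * A) i j * v j
        = ∑ j, ∑ k, v i * F t k i * A k j * v j := by
      intro i
      rw [Finset.mul_sum]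
      apply Finset.sum_congr rfl; intro j _
      rw [Matrix.mul_apply, Finset.sum_mul, Finset.mul_sum]
      exact Finset.sum_congr rfl fun k _ => by rw [Matrix.transpose_apply]; ring
    have e2 : ∀ k, (∑ j, F t k j * v j) * a k = ∑ i, ∑ j, v i * F t k i * A k j * v j := by
      intro k
      rw [Finset.sum_mul]
      apply Finset.sum_congr rfl; intro i _
      simp only [hadef]
      rw [Finset.mul_sum]
      exact Finset.sum_congr rfl fun j _ => by ring
    rw [Finset.sum_congr rfl fun i _ => e1 i, Finset.sum_congr rfl fun k _ => e2 k]
    calc ∑ i, ∑ j, ∑ k, v i * F t k i * A k j * v j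
        = ∑ i, ∑ k, ∑ j, v i * F t k i * A k j * v j :=
          Finset.sum_congr rfl fun i _ => Finset.sum_comm
      _ = ∑ k, ∑ i, ∑ j, v i * F t k i * A k j * v j := Finset.sum_comm
  have hsplit : Q'v = ∑ i, (-(u i * a i) - v i * (∑ j, (A * F t) i j * v j)
      - v i * (∑ j, ((F t)ᵀ * A) i j * v j) - v i * (∑ j, A i j * u j)) := by
    rw [hQ'vdef]
    apply Finset.sum_congr rfl; intro i _
    have hinner : ∀ j, (-(A * S' t * A)) i j * v j + A i j * (-u j)
        = (-((A * F t) i j * v j) - ((F t)ᵀ * A) i j * v j) - A i j * u j := by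
      intro j
      have he : (-(A * S' t * A)) i j = -((A * F t) i j) - ((F t)ᵀ * A) i j := by
        rw [Matrix.neg_apply, hkey, Matrix.add_apply]
        ring
      rw [he]; ring
    rw [Finset.sum_congr rfl fun j _ => hinner j, Finset.sum_sub_distrib,
      Finset.sum_sub_distrib, Finset.sum_neg_distrib]
    ring
  have hfv : ∀ k, (∑ j, F t k j * v j) * a k = w k * a k - u k * a k := by
    intro k
    have hwk : (∑ j, F t k j * v j) = w k - u k := by
      simp only [hvdef, hwdef, hudef, mul_sub, Finset.sum_sub_distrib]
      ring
    rw [hwk]; ring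
  have hQ'v_eq : Q'v = -2 * ∑ i, w i * a i := by
    rw [hsplit, Finset.sum_sub_distrib, Finset.sum_sub_distrib, Finset.sum_sub_distrib,
      Finset.sum_neg_distrib, f1, f2, f3]
    simp only [hfv]
    simp only [Finset.sum_sub_distrib]
    ring
  rw [hderiv_eq, hdiver, hQ'v_eq]
  ring
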